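/- General regret bound via information ratios: Let χ, ℰ be random variables, (P_t)_{t≥0} a sequence of random variables (epistemic states) such that t ↦ I(χ; ℰ | P_t) is nonincreasing with I(χ; ℰ | P₀) = I(χ; ℰ). Suppose per-step expected shortfalls d_t ≥ 0 satisfy, for some τ ∈ ℤ₊₊ and ε_t ≥ 0, (max(d_t − ε_t, 0))² ≤ Γ_t · (I(χ; ℰ | P_t) − I(χ; ℰ | P_{t+τ}))/τ for all t < T, where Γ_t ≥ 0. Then Σ_{t=0}^{T−1} d_t ≤ √(I(χ; ℰ) · Σ_{t=0}^{T−1} Γ_t) + Σ_{t=0}^{T−1} ε_t. -/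
import Mathlib


/-- General regret bound via (τ, ε)-information ratios.  Here `I t` plays the role
of the conditional mutual information `𝕀(χ; ℰ | P_t)` (nonnegative, nonincreasing,
with `I 0 = 𝕀(χ; ℰ)`), `d t` the per-step expected shortfall, `ε t` the tolerance,
and `Γ t` the information ratio.  Then
`Σ_{t<T} d t ≤ √(I 0 · Σ_{t<T} Γ t) + Σ_{t<T} ε t`. -/
theorem regret_bound_info_ratio (T τ : ℕ) (hτ : 0 < τ)
    (I : ℕ → ℝ) (hInonneg : ∀ t, 0 ≤ I t) (hImono : ∀ m n : ℕ, m ≤ n → I n ≤ I m)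
    (d ε Γ : ℕ → ℝ) (hd : ∀ t, 0 ≤ d t) (hε : ∀ t, 0 ≤ ε t) (hΓ : ∀ t, 0 ≤ Γ t)
    (hratio : ∀ t < T, (max (d t - ε t) 0) ^ 2 ≤ Γ t * ((I t - I (t + τ)) / τ)) :
    ∑ t ∈ Finset.range T, d t ≤
      Real.sqrt (I 0 * ∑ t ∈ Finset.range T, Γ t) + ∑ t ∈ Finset.range T, ε t := by
  set a : ℕ → ℝ := fun t => max (d t - ε t) 0 with ha
  set Δ : ℕ → ℝ := fun t => (I t - I (t + τ)) / τ with hΔ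
  have hΔnonneg : ∀ t, 0 ≤ Δ t := fun t =>
    div_nonneg (sub_nonneg.2 (hImono t (t + τ) (Nat.le_add_right _ _)))
      (Nat.cast_nonneg τ)
  -- telescoping bound : ∑ Δ ≤ I 0
  have htel : ∑ t ∈ Finset.range T, Δ t ≤ I 0 := by
    have hsum : ∑ t ∈ Finset.range T, Δ t
        = ((∑ t ∈ Finset.range T, I t) - ∑ t ∈ Finset.range T, I (t + τ)) / τ := by
      rw [← Finset.sum_sub_distrib, ← Finset.sum_div]
    rw [hsum, div_le_iff₀ (by exact_mod_cast hτ)]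
    have hshift : ∑ t ∈ Finset.range T, I (t + τ) = ∑ t ∈ Finset.Ico τ (T + τ), I t := by
      rw [Finset.sum_Ico_eq_sum_range]
      simp [add_comm, Nat.add_sub_cancel]
    have hIc : ∀ s : Finset ℕ, ∑ t ∈ s, I t ≤ s.card * I 0 := by
      intro s
      calc ∑ t ∈ s, I t ≤ ∑ _t ∈ s, I 0 :=
            Finset.sum_le_sum fun t _ => hImono 0 t (Nat.zero_le t)
        _ = s.card * I 0 := by rw [Finset.sum_const, nsmul_eq_mul]
    have hIcnn : ∀ s : Finset ℕ, (0:ℝ) ≤ ∑ t ∈ s, I t := fun s =>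
      Finset.sum_nonneg fun t _ => hInonneg t
    rw [hshift]
    rcases le_or_gt τ T with hcase | hcase
    · have h1 : ∑ t ∈ Finset.range T, I t
          = ∑ t ∈ Finset.Ico 0 τ, I t + ∑ t ∈ Finset.Ico τ T, I t := by
        rw [Finset.sum_Ico_consecutive _ (Nat.zero_le τ) hcase, Finset.range_eq_Ico]
      have h2 : ∑ t ∈ Finset.Ico τ (T + τ), I t
          = ∑ t ∈ Finset.Ico τ T, I t + ∑ t ∈ Finset.Ico T (T + τ), I t := by
        rw [Finset.sum_Ico_consecutive _ hcase (Nat.le_add_right _ _)]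
      rw [h1, h2]
      have := hIc (Finset.Ico 0 τ)
      have h3 := hIcnn (Finset.Ico T (T + τ))
      simp only [Nat.card_Ico, Nat.sub_zero] at this
      linarith
    · have h1 : ∑ t ∈ Finset.range T, I t ≤ T * I 0 := by
        have := hIc (Finset.range T); simpa using this
      have h2 := hIcnn (Finset.Ico τ (T + τ))
      have h3 : (T:ℝ) * I 0 ≤ I 0 * τ := by
        rw [mul_comm (I 0)]
        exact mul_le_mul_of_nonneg_right (by exact_mod_cast hcase.le) (hInonneg 0)
      linarith
  -- Cauchy–Schwarz
  have hCS : ∑ t ∈ Finset.range T, a t ≤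
      Real.sqrt (I 0 * ∑ t ∈ Finset.range T, Γ t) := by
    have step1 : ∑ t ∈ Finset.range T, a t ≤
        ∑ t ∈ Finset.range T, Real.sqrt (Γ t) * Real.sqrt (Δ t) := by
      apply Finset.sum_le_sum
      intro t ht
      have h := hratio t (Finset.mem_range.1 ht)
      have hanon : 0 ≤ a t := le_max_right _ _
      have : a t ≤ Real.sqrt (Γ t * Δ t) := by
        rw [← Real.sqrt_sq hanon]
        exact Real.sqrt_le_sqrt (by simpa [ha, hΔ, sq] using h)
      rwa [Real.sqrt_mul (hΓ t)] at this
    have step2 : (∑ t ∈ Finset.range T, Real.sqrt (Γ t) * Real.sqrt (Δ t)) ^ 2 ≤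
        (∑ t ∈ Finset.range T, Γ t) * (∑ t ∈ Finset.range T, Δ t) := by
      calc (∑ t ∈ Finset.range T, Real.sqrt (Γ t) * Real.sqrt (Δ t)) ^ 2
          ≤ (∑ t ∈ Finset.range T, Real.sqrt (Γ t) ^ 2) *
            (∑ t ∈ Finset.range T, Real.sqrt (Δ t) ^ 2) :=
            Finset.sum_mul_sq_le_sq_mul_sq _ _ _
        _ = (∑ t ∈ Finset.range T, Γ t) * (∑ t ∈ Finset.range T, Δ t) := by
            congr 1 <;> exact Finset.sum_congr rfl fun t _ =>
              Real.sq_sqrt (by first | exact hΓ t | exact hΔnonneg t)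
    have hΓsum : 0 ≤ ∑ t ∈ Finset.range T, Γ t :=
      Finset.sum_nonneg fun t _ => hΓ t
    have hsumnn : 0 ≤ ∑ t ∈ Finset.range T, Real.sqrt (Γ t) * Real.sqrt (Δ t) :=
      Finset.sum_nonneg fun t _ =>
        mul_nonneg (Real.sqrt_nonneg _) (Real.sqrt_nonneg _)
    calc ∑ t ∈ Finset.range T, a t
        ≤ ∑ t ∈ Finset.range T, Real.sqrt (Γ t) * Real.sqrt (Δ t) := step1
      _ = Real.sqrt ((∑ t ∈ Finset.range T, Real.sqrt (Γ t) * Real.sqrt (Δ t)) ^ 2) :=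
          (Real.sqrt_sq hsumnn).symm
      _ ≤ Real.sqrt ((∑ t ∈ Finset.range T, Γ t) * (∑ t ∈ Finset.range T, Δ t)) :=
          Real.sqrt_le_sqrt step2
      _ ≤ Real.sqrt (I 0 * ∑ t ∈ Finset.range T, Γ t) := by
          apply Real.sqrt_le_sqrt
          rw [mul_comm (I 0)]
          exact mul_le_mul_of_nonneg_left htel hΓsum
  have hda : ∀ t, d t ≤ a t + ε t := by
    intro t
    have : d t - ε t ≤ a t := le_max_left _ _
    linarith
  calc ∑ t ∈ Finset.range T, d t
      ≤ ∑ t ∈ Finset.range T, (a t + ε t) :=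
        Finset.sum_le_sum fun t _ => hda t
    _ = ∑ t ∈ Finset.range T, a t + ∑ t ∈ Finset.range T, ε t :=
        Finset.sum_add_distrib
    _ ≤ Real.sqrt (I 0 * ∑ t ∈ Finset.range T, Γ t) + ∑ t ∈ Finset.range T, ε t := by
        linarith [hCS]
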